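/- arXiv:1408.5268 — 3 statements merged into one kernel-verified Lean document; each statement's English description precedes it below -/
import Mathlib

section
/- For every positive integer n, the Landau constant partial sum S_n = ∑_{k=0}^{n-1} ((1/2)_k)^2/(k!)^2 satisfies S_n = (λ_n/π) · ∑_{k=0}^∞ [((1/2)_k)^2 / ((n+1)_k k!)] · {ψ(n+1+k) + ψ(1+k) − 2ψ(1/2+k)}, where λ_n = Γ(n+1/2)^2/(Γ(n)Γ(n+1)). -/
/-- The Pochhammer (rising factorial) symbol `(x)_k` for real `x`. -/
noncomputable def rpoch (x : ℝ) (k : ℕ) : ℝ := ∏ i ∈ Finset.range k, (x + i)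

/-- The digamma function `ψ = Γ'/Γ` on `ℝ`. -/
noncomputable def rdigamma (x : ℝ) : ℝ := deriv Real.Gamma x / Real.Gamma x

open Real Finset Filter Topology

lemma rpoch_zero (x : ℝ) : rpoch x 0 = 1 := by simp [rpoch]

lemma rpoch_succ (x : ℝ) (k : ℕ) : rpoch x (k+1) = rpoch x k * (x + k) := by
  simp [rpoch, Finset.prod_range_succ]

lemma rpoch_pos {x : ℝ} (hx : 0 < x) (k : ℕ) : 0 < rpoch x k := by
  induction k with
  | zero => simp [rpoch_zero]
  | succ k ih => rw [rpoch_succ]; positivity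

lemma rpoch_shift (x : ℝ) (k : ℕ) : rpoch (x+1) k * x = rpoch x k * (x + k) := by
  induction k with
  | zero => simp [rpoch_zero]
  | succ k ih =>
    rw [rpoch_succ, rpoch_succ]
    push_cast
    linear_combination (x + 1 + (k:ℝ)) * ih

lemma gamma_ne_zero_of_pos {x : ℝ} (hx : 0 < x) : Real.Gamma x ≠ 0 :=
  (Real.Gamma_pos_of_pos hx).ne'

lemma diffat_Gamma {x : ℝ} (hx : 0 < x) : DifferentiableAt ℝ Real.Gamma x :=
  Real.differentiableAt_Gamma (fun m => by
    have : (0:ℝ) ≤ m := Nat.cast_nonneg m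
    linarith)

lemma rdigamma_rec {x : ℝ} (hx : 0 < x) : rdigamma (x+1) = rdigamma x + 1/x := by
  have hdx := diffat_Gamma hx
  have h1 : deriv (fun y => Real.Gamma (y+1)) x = deriv Real.Gamma (x+1) := by
    rw [deriv_comp_add_const]
  have h2 : deriv (fun y => Real.Gamma (y+1)) x = deriv (fun y => y * Real.Gamma y) x := by
    apply Filter.EventuallyEq.deriv_eq
    filter_upwards [eventually_gt_nhds hx] with y hy
    exact Real.Gamma_add_one hy.ne'
  have h3 : deriv (fun y => y * Real.Gamma y) x = Real.Gamma x + x * deriv Real.Gamma x := by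
    have := (hasDerivAt_id x).mul hdx.hasDerivAt
    exact ((hasDerivAt_id' x).mul hdx.hasDerivAt).deriv.trans (by ring)
  have hG : Real.Gamma (x+1) = x * Real.Gamma x := Real.Gamma_add_one hx.ne'
  have hGx := gamma_ne_zero_of_pos hx
  rw [rdigamma, rdigamma, ← h1, h2, h3, hG]
  field_simp
  ring

lemma rdigamma_eq_deriv_log {x : ℝ} (hx : 0 < x) :
    rdigamma x = deriv (Real.log ∘ Real.Gamma) x := by
  rw [Function.comp_def, deriv.log (diffat_Gamma hx) (gamma_ne_zero_of_pos hx), rdigamma]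

lemma rdigamma_mono {x y : ℝ} (hx : 0 < x) (hxy : x ≤ y) : rdigamma x ≤ rdigamma y := by
  rcases eq_or_lt_of_le hxy with h | h
  · rw [h]
  · have hy : 0 < y := lt_trans hx h
    rw [rdigamma_eq_deriv_log hx, rdigamma_eq_deriv_log hy]
    have hdx : DifferentiableAt ℝ (Real.log ∘ Real.Gamma) x :=
      (diffat_Gamma hx).log (gamma_ne_zero_of_pos hx)
    have hdy : DifferentiableAt ℝ (Real.log ∘ Real.Gamma) y :=
      (diffat_Gamma hy).log (gamma_ne_zero_of_pos hy)
    calc deriv (Real.log ∘ Real.Gamma) x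
        ≤ slope (Real.log ∘ Real.Gamma) x y :=
          Real.convexOn_log_Gamma.deriv_le_slope (Set.mem_Ioi.2 hx) (Set.mem_Ioi.2 hy) h hdx
      _ ≤ deriv (Real.log ∘ Real.Gamma) y :=
          Real.convexOn_log_Gamma.slope_le_deriv (Set.mem_Ioi.2 hx) (Set.mem_Ioi.2 hy) h hdy

/-- `W k = ψ(k+1) - ψ(k+1/2)`. -/
noncomputable def Wd (k : ℕ) : ℝ := rdigamma ((k:ℝ)+1) - rdigamma ((k:ℝ)+1/2)

lemma Wd_nonneg (k : ℕ) : 0 ≤ Wd k := by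
  have : rdigamma ((k:ℝ)+1/2) ≤ rdigamma ((k:ℝ)+1) := by
    apply rdigamma_mono (by positivity) (by norm_num)
  simpa [Wd] using this

lemma Wd_succ (k : ℕ) : Wd (k+1) = Wd k - 1/(((k:ℝ)+1)*(2*(k:ℝ)+1)) := by
  have h1 : rdigamma (((k:ℕ)+1:ℕ) + 1) = rdigamma ((k:ℝ)+1) + 1/((k:ℝ)+1) := by
    push_cast
    exact rdigamma_rec (by positivity)
  have h2 : rdigamma (((k:ℕ)+1:ℕ) + 1/2) = rdigamma ((k:ℝ)+1/2) + 1/((k:ℝ)+1/2) := by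
    push_cast
    have := rdigamma_rec (x := (k:ℝ)+1/2) (by positivity)
    rw [show ((k:ℝ) + 1 + 1/2) = ((k:ℝ)+1/2)+1 by ring]
    exact this
  rw [Wd, h1, h2, Wd]
  have hk : ((k:ℝ)+1)*(2*(k:ℝ)+1) ≠ 0 := by positivity
  field_simp
  ring

lemma Wd_le {k : ℕ} (hk : 0 < k) : Wd k ≤ 1/(k:ℝ) := by
  have hk' : (0:ℝ) < k := by exact_mod_cast hk
  have h1 : rdigamma ((k:ℝ)) ≤ rdigamma ((k:ℝ)+1/2) := rdigamma_mono hk' (by norm_num)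
  have h2 : rdigamma ((k:ℝ)+1) = rdigamma (k:ℝ) + 1/(k:ℝ) := rdigamma_rec hk'
  simp only [Wd]
  linarith

lemma Wd_k_le_one (k : ℕ) : (k:ℝ) * Wd k ≤ 1 := by
  rcases Nat.eq_zero_or_pos k with h | h
  · simp [h]
  · have h1 := Wd_le h
    have hk' : (0:ℝ) < k := by exact_mod_cast h
    calc (k:ℝ) * Wd k ≤ (k:ℝ) * (1/(k:ℝ)) := by nlinarith
    _ = 1 := by field_simp

/-- coefficient `c n k = ((1/2)_k)^2 / ((n+1)_k k!)` -/
noncomputable def cc (n k : ℕ) : ℝ :=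
  (rpoch (1/2) k)^2 / (rpoch ((n:ℝ)+1) k * (Nat.factorial k : ℝ))

lemma cc_pos (n k : ℕ) : 0 < cc n k := by
  have h1 := rpoch_pos (x := (1:ℝ)/2) (by norm_num) k
  have h2 := rpoch_pos (x := (n:ℝ)+1) (by positivity) k
  have h3 : (0:ℝ) < (Nat.factorial k : ℝ) := by exact_mod_cast Nat.factorial_pos k
  exact div_pos (by positivity) (by positivity)

lemma cc_zero (n : ℕ) : cc n 0 = 1 := by simp [cc, rpoch_zero]

lemma cc_succ_k (n k : ℕ) :
    cc n (k+1) = cc n k * (((k:ℝ)+1/2)^2 / ((((n:ℝ)+1+k))*((k:ℝ)+1))) := by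
  have h2 := (rpoch_pos (x := (n:ℝ)+1) (by positivity) k).ne'
  have h3 : ((Nat.factorial k : ℕ):ℝ) ≠ 0 := by exact_mod_cast (Nat.factorial_pos k).ne'
  rw [cc, cc, rpoch_succ, rpoch_succ, Nat.factorial_succ]
  push_cast
  field_simp
  ring

lemma cc_succ_n (n k : ℕ) : cc (n+1) k = cc n k * (((n:ℝ)+1)/((n:ℝ)+1+k)) := by
  have hsh := rpoch_shift ((n:ℝ)+1) k
  have h2 := (rpoch_pos (x := (n:ℝ)+1) (by positivity) k).ne'
  have h2' := (rpoch_pos (x := (n:ℝ)+2) (by positivity) k).ne'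
  have h3 : ((Nat.factorial k : ℕ):ℝ) ≠ 0 := by exact_mod_cast (Nat.factorial_pos k).ne'
  have hn1 : ((n:ℝ)+1) ≠ 0 := by positivity
  have hnk : ((n:ℝ)+1+(k:ℝ)) ≠ 0 := by positivity
  have hrw : rpoch ((n:ℝ)+1+1) k = rpoch ((n:ℝ)+1) k * (((n:ℝ)+1+k)/((n:ℝ)+1)) := by
    field_simp
    linarith [hsh]
  rw [cc, cc]
  push_cast
  rw [show ((n:ℝ)+1+1) = ((n:ℝ)+1)+1 from by ring] at hrw ⊢
  rw [hrw]
  field_simp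

lemma cc_le (n k : ℕ) : cc n k ≤ 1/(2*(k:ℝ)+1) := by
  induction k with
  | zero => simp [cc_zero]
  | succ k ih =>
    rw [cc_succ_k]
    have hpos : (0:ℝ) < ((n:ℝ)+1+k)*((k:ℝ)+1) := by positivity
    have h1 : cc n k * (((k:ℝ)+1/2)^2 / (((n:ℝ)+1+k)*((k:ℝ)+1)))
        ≤ (1/(2*(k:ℝ)+1)) * (((k:ℝ)+1/2)^2 / (((n:ℝ)+1+k)*((k:ℝ)+1))) := by
      apply mul_le_mul_of_nonneg_right ih (by positivity)
    refine h1.trans ?_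
    rw [div_mul_div_comm, div_le_div_iff₀ (by positivity) (by positivity)]
    push_cast
    nlinarith [Nat.cast_nonneg (α := ℝ) n, Nat.cast_nonneg (α := ℝ) k]

/-- `V n k = ∑_{i<n} 1/(k+1+i)` -/
noncomputable def Vv (n k : ℕ) : ℝ := ∑ i ∈ Finset.range n, 1/((k:ℝ)+1+i)

lemma Vv_zero (k : ℕ) : Vv 0 k = 0 := by simp [Vv]

lemma Vv_succ_n (n k : ℕ) : Vv (n+1) k = Vv n k + 1/((k:ℝ)+1+n) := by
  simp [Vv, Finset.sum_range_succ]

lemma Vv_succ_k (n k : ℕ) : Vv n (k+1) = Vv n k + 1/((n:ℝ)+1+k) - 1/((k:ℝ)+1) := by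
  have h1 : Vv (n+1) k = 1/((k:ℝ)+1) + Vv n (k+1) := by
    rw [Vv, Finset.sum_range_succ']
    simp only [Vv]
    push_cast
    ring_nf
  have h2 := Vv_succ_n n k
  rw [h1] at h2
  rw [show ((n:ℝ)+1+k) = ((k:ℝ)+1+n) by ring]
  linarith

lemma Vv_nonneg (n k : ℕ) : 0 ≤ Vv n k := by
  apply Finset.sum_nonneg; intro i _; positivity

lemma Vv_k_le (n k : ℕ) : (k:ℝ) * Vv n k ≤ n := by
  rw [Vv, Finset.mul_sum]
  calc ∑ i ∈ Finset.range n, (k:ℝ) * (1/((k:ℝ)+1+i))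
      ≤ ∑ i ∈ Finset.range n, 1 := by
        apply Finset.sum_le_sum
        intro i _
        rw [mul_one_div, div_le_one (by positivity)]
        have : (0:ℝ) ≤ i := Nat.cast_nonneg i
        linarith
    _ = n := by simp

/-- the summand -/
noncomputable def tm (n k : ℕ) : ℝ := cc n k * (Vv n k + 2 * Wd k)

lemma tm_nonneg (n k : ℕ) : 0 ≤ tm n k := by
  have h1 := cc_pos n k
  have h2 := Vv_nonneg n k
  have h3 := Wd_nonneg k
  have : 0 ≤ Vv n k + 2 * Wd k := by linarith
  exact mul_nonneg h1.le this

/-- the WZ certificate -/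
noncomputable def Dl (n k : ℕ) : ℝ :=
  cc n k * (4*((n:ℝ)+1)/(2*(n:ℝ)+1)^2) * (1 - 2*(k:ℝ)*Wd k - (k:ℝ)*Vv n k)

/-- The WZ certificate identity. -/
lemma certificate (n k : ℕ) :
    tm (n+1) k - (4*(n:ℝ)*((n:ℝ)+1)/(2*(n:ℝ)+1)^2) * tm n k = Dl n k - Dl n (k+1) := by
  have hW := Wd_succ k
  have hV := Vv_succ_k n k
  have hVn := Vv_succ_n n k
  have hc := cc_succ_k n k
  have hcn := cc_succ_n n k
  rw [tm, tm, Dl, Dl, hc, hcn, hW, hV, hVn]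
  push_cast
  set C := cc n k
  set X := Wd k
  set Y := Vv n k
  have h1 : ((n:ℝ)+1+k) ≠ 0 := by positivity
  have h2 : ((k:ℝ)+1) ≠ 0 := by positivity
  have h3 : (2*(k:ℝ)+1) ≠ 0 := by positivity
  have h4 : (2*(n:ℝ)+1) ≠ 0 := by positivity
  have h5 : ((k:ℝ)+1+n) ≠ 0 := by positivity
  field_simp
  ring

lemma Dl_zero (n : ℕ) : Dl n 0 = 4*((n:ℝ)+1)/(2*(n:ℝ)+1)^2 := by
  simp [Dl, cc_zero]

lemma Dl_abs_le (n k : ℕ) : |Dl n k| ≤ (4*((n:ℝ)+1)/(2*(n:ℝ)+1)^2) * ((n:ℝ)+3) * (1/(2*(k:ℝ)+1)) := by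
  rw [Dl, abs_mul, abs_mul]
  have hg : |4*((n:ℝ)+1)/(2*(n:ℝ)+1)^2| = 4*((n:ℝ)+1)/(2*(n:ℝ)+1)^2 := abs_of_pos (by positivity)
  have hcc : |cc n k| = cc n k := abs_of_pos (cc_pos n k)
  have hb : |1 - 2*(k:ℝ)*Wd k - (k:ℝ)*Vv n k| ≤ (n:ℝ)+3 := by
    rw [abs_le]
    have h1 := Wd_k_le_one k
    have h2 := Vv_k_le n k
    have h3 : 0 ≤ (k:ℝ)*Wd k := mul_nonneg (Nat.cast_nonneg k) (Wd_nonneg k)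
    have h4 : 0 ≤ (k:ℝ)*Vv n k := mul_nonneg (Nat.cast_nonneg k) (Vv_nonneg n k)
    constructor <;> nlinarith
  rw [hg, hcc]
  calc cc n k * (4*((n:ℝ)+1)/(2*(n:ℝ)+1)^2) * |1 - 2*(k:ℝ)*Wd k - (k:ℝ)*Vv n k|
      ≤ (1/(2*(k:ℝ)+1)) * (4*((n:ℝ)+1)/(2*(n:ℝ)+1)^2) * ((n:ℝ)+3) := by
        apply mul_le_mul
        · exact mul_le_mul_of_nonneg_right (cc_le n k) (by positivity)
        · exact hb
        · exact abs_nonneg _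
        · positivity
    _ = (4*((n:ℝ)+1)/(2*(n:ℝ)+1)^2) * ((n:ℝ)+3) * (1/(2*(k:ℝ)+1)) := by ring

lemma Dl_tendsto (n : ℕ) : Tendsto (fun k => Dl n k) atTop (𝓝 0) := by
  apply squeeze_zero_norm (fun k => by simpa using Dl_abs_le n k)
  have h : Tendsto (fun k : ℕ => (1:ℝ)/(2*(k:ℝ)+1)) atTop (𝓝 0) := by
    simp only [one_div]
    apply Tendsto.comp tendsto_inv_atTop_zero
    apply Filter.tendsto_atTop_add_const_right
    exact (tendsto_natCast_atTop_atTop (R := ℝ)).const_mul_atTop (by norm_num)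
  have := h.const_mul ((4*((n:ℝ)+1)/(2*(n:ℝ)+1)^2) * ((n:ℝ)+3))
  simpa [mul_comm, mul_assoc, one_div] using this

lemma partial_sum_eq (n K : ℕ) :
    ∑ k ∈ Finset.range K, tm (n+1) k
      = (4*(n:ℝ)*((n:ℝ)+1)/(2*(n:ℝ)+1)^2) * (∑ k ∈ Finset.range K, tm n k) + (Dl n 0 - Dl n K) := by
  have h : ∀ k, tm (n+1) k = (4*(n:ℝ)*((n:ℝ)+1)/(2*(n:ℝ)+1)^2) * tm n k + (Dl n k - Dl n (k+1)) := by
    intro k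
    have := certificate n k
    linarith
  calc ∑ k ∈ Finset.range K, tm (n+1) k
      = ∑ k ∈ Finset.range K, ((4*(n:ℝ)*((n:ℝ)+1)/(2*(n:ℝ)+1)^2) * tm n k + (Dl n k - Dl n (k+1))) :=
        Finset.sum_congr rfl (fun k _ => h k)
    _ = (4*(n:ℝ)*((n:ℝ)+1)/(2*(n:ℝ)+1)^2) * (∑ k ∈ Finset.range K, tm n k)
          + ∑ k ∈ Finset.range K, (Dl n k - Dl n (k+1)) := by
        rw [Finset.sum_add_distrib, Finset.mul_sum]
    _ = _ := by rw [Finset.sum_range_sub' (fun k => Dl n k) K]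

lemma Wd_le_two (k : ℕ) : Wd k ≤ 2 := by
  cases k with
  | zero =>
    have h := Wd_succ 0
    have h1 : Wd 1 ≤ 1 := by simpa using Wd_le (k := 1) one_pos
    push_cast at h
    norm_num at h
    linarith
  | succ k =>
    have h1 : Wd (k+1) ≤ 1/((k:ℝ)+1) := by
      have := Wd_le (k := k+1) (Nat.succ_pos k)
      push_cast at this
      exact this
    have : (1:ℝ)/((k:ℝ)+1) ≤ 1 := by
      rw [div_le_one (by positivity)]
      linarith [Nat.cast_nonneg (α := ℝ) k]
    linarith

lemma tm_zero_summable : Summable (tm 0) := by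
  have hmaj : Summable (fun k : ℕ => 4/((k:ℝ)+1)^2) := by
    have h : Summable (fun k : ℕ => 1/((k:ℝ)+1)^2) := by
      have := (summable_nat_add_iff (f := fun k : ℕ => 1/(k:ℝ)^2) 1).2
        (Real.summable_one_div_nat_pow.2 one_lt_two)
      simpa using this
    simpa [div_eq_mul_inv] using h.mul_left 4
  apply Summable.of_nonneg_of_le (tm_nonneg 0) _ hmaj
  · intro k
    rw [tm, Vv_zero]
    cases k with
    | zero =>
      simp only [cc_zero]
      have := Wd_le_two 0
      norm_num
      linarith
    | succ k =>
      have h1 : cc 0 (k+1) ≤ 1/(2*((k+1:ℕ):ℝ)+1) := cc_le 0 (k+1)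
      have h2 : Wd (k+1) ≤ 1/((k:ℝ)+1) := by
        have := Wd_le (k := k+1) (Nat.succ_pos k)
        push_cast at this
        exact this
      have h3 := (cc_pos 0 (k+1)).le
      have h4 := Wd_nonneg (k+1)
      push_cast at h1 ⊢
      calc cc 0 (k+1) * (0 + 2 * Wd (k+1))
          ≤ (1/(2*((k:ℝ)+1)+1)) * (2 * (1/((k:ℝ)+1))) := by
            apply mul_le_mul h1 (by linarith) (by linarith) (by positivity)
        _ = 2/((2*((k:ℝ)+1)+1)*((k:ℝ)+1)) := by
            field_simp
        _ ≤ 4/((k:ℝ)+1+1)^2 := by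
            rw [div_le_div_iff₀ (by positivity) (by positivity)]
            nlinarith [Nat.cast_nonneg (α := ℝ) k]

lemma main_step (n : ℕ) (hs : Summable (tm n)) :
    Summable (tm (n+1)) ∧
      ∑' k, tm (n+1) k = (4*(n:ℝ)*((n:ℝ)+1)/(2*(n:ℝ)+1)^2) * (∑' k, tm n k)
        + 4*((n:ℝ)+1)/(2*(n:ℝ)+1)^2 := by
  set α := 4*(n:ℝ)*((n:ℝ)+1)/(2*(n:ℝ)+1)^2 with hα
  have hα0 : 0 ≤ α := by positivity
  set B := (4*((n:ℝ)+1)/(2*(n:ℝ)+1)^2) * ((n:ℝ)+3) with hB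
  have hDlB : ∀ K, |Dl n K| ≤ B := by
    intro K
    refine (Dl_abs_le n K).trans ?_
    rw [hB]
    have h1 : (1:ℝ)/(2*(K:ℝ)+1) ≤ 1 := by
      rw [div_le_one (by positivity)]
      linarith [Nat.cast_nonneg (α := ℝ) K]
    have h2 : (0:ℝ) ≤ 4*((n:ℝ)+1)/(2*(n:ℝ)+1)^2 * ((n:ℝ)+3) := by positivity
    nlinarith
  have hsum : Summable (tm (n+1)) := by
    apply summable_of_sum_range_le (c := α * (∑' k, tm n k) + Dl n 0 + B) (tm_nonneg (n+1))
    intro K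
    rw [partial_sum_eq n K]
    have h1 : ∑ k ∈ Finset.range K, tm n k ≤ ∑' k, tm n k :=
      Summable.sum_le_tsum _ (fun i _ => tm_nonneg n i) hs
    have h2 := (abs_le.1 (hDlB K)).1
    nlinarith
  refine ⟨hsum, ?_⟩
  have ht1 : Tendsto (fun K => ∑ k ∈ Finset.range K, tm (n+1) k) atTop (𝓝 (∑' k, tm (n+1) k)) :=
    hsum.hasSum.tendsto_sum_nat
  have ht2 : Tendsto (fun K => α * (∑ k ∈ Finset.range K, tm n k) + (Dl n 0 - Dl n K)) atTop
      (𝓝 (α * (∑' k, tm n k) + (Dl n 0 - 0))) := by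
    exact ((hs.hasSum.tendsto_sum_nat.const_mul α)).add
      (tendsto_const_nhds.sub (Dl_tendsto n))
  have heq : (fun K => ∑ k ∈ Finset.range K, tm (n+1) k)
      = (fun K => α * (∑ k ∈ Finset.range K, tm n k) + (Dl n 0 - Dl n K)) := by
    funext K
    exact partial_sum_eq n K
  rw [heq] at ht1
  have := tendsto_nhds_unique ht1 ht2
  rw [this, Dl_zero]
  ring

/-- `AA m = S_{m+1} (m+1)! m! / ((1/2)_{m+1})^2`. -/
noncomputable def AA (m : ℕ) : ℝ :=
  (∑ k ∈ Finset.range (m+1), (rpoch (1/2) k)^2 / (Nat.factorial k : ℝ)^2)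
    * (Nat.factorial (m+1) : ℝ) * (Nat.factorial m : ℝ) / (rpoch (1/2) (m+1))^2

lemma AA_zero : AA 0 = 4 := by
  simp [AA, rpoch_succ, rpoch_zero]
  norm_num

lemma AA_succ (m : ℕ) :
    AA (m+1) = (4*((m+1:ℕ):ℝ)*(((m+1:ℕ):ℝ)+1)/(2*((m+1:ℕ):ℝ)+1)^2) * AA m
      + 4*(((m+1:ℕ):ℝ)+1)/(2*((m+1:ℕ):ℝ)+1)^2 := by
  have hS : ∑ k ∈ Finset.range (m+2), (rpoch (1/2) k)^2 / (Nat.factorial k : ℝ)^2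
      = (∑ k ∈ Finset.range (m+1), (rpoch (1/2) k)^2 / (Nat.factorial k : ℝ)^2)
        + (rpoch (1/2) (m+1))^2 / (Nat.factorial (m+1) : ℝ)^2 := Finset.sum_range_succ _ _
  have hposh := rpoch_pos (x := (1:ℝ)/2) (by norm_num) (m+1)
  have hph : rpoch (1/2) (m+2) = rpoch (1/2) (m+1) * ((1:ℝ)/2 + ((m+1:ℕ):ℝ)) := by
    rw [show m+2 = (m+1)+1 from rfl, rpoch_succ]
    try push_cast
    try ring
  have hf2 : (Nat.factorial (m+2) : ℝ) = (((m+1:ℕ):ℝ)+1) * (Nat.factorial (m+1) : ℝ) := by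
    rw [show m+2 = (m+1)+1 from rfl, Nat.factorial_succ]
    try push_cast
    try ring
  have hf1 : (Nat.factorial (m+1) : ℝ) = (((m+1:ℕ):ℝ)) * (Nat.factorial m : ℝ) := by
    rw [Nat.factorial_succ]
    try push_cast
    try ring
  have hfm : (0:ℝ) < (Nat.factorial m : ℝ) := by exact_mod_cast Nat.factorial_pos m
  have hfm1 : (0:ℝ) < (Nat.factorial (m+1) : ℝ) := by exact_mod_cast Nat.factorial_pos (m+1)
  rw [AA, AA, hS, hph, hf2]
  push_cast at hf1 ⊢
  rw [hf1]
  have h1 : ((m:ℝ)+1) ≠ 0 := by positivity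
  have h2 : (2*((m:ℝ)+1)+1) ≠ 0 := by positivity
  have h3 : rpoch (1/2) (m+1) ≠ 0 := hposh.ne'
  have h4 : (Nat.factorial m : ℝ) ≠ 0 := hfm.ne'
  field_simp
  ring

lemma main_induction (m : ℕ) : Summable (tm (m+1)) ∧ ∑' k, tm (m+1) k = AA m := by
  induction m with
  | zero =>
    obtain ⟨hs, ht⟩ := main_step 0 tm_zero_summable
    refine ⟨hs, ?_⟩
    rw [ht, AA_zero]
    norm_num
  | succ m ih =>
    obtain ⟨hs, ht⟩ := main_step (m+1) ih.1
    refine ⟨hs, ?_⟩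
    rw [ht, ih.2, AA_succ m]

lemma dig_shift (n k : ℕ) :
    rdigamma ((n:ℝ)+1+(k:ℝ)) = rdigamma ((k:ℝ)+1) + Vv n k := by
  induction n with
  | zero =>
    rw [Vv_zero, show ((0:ℕ):ℝ)+1+(k:ℝ) = (k:ℝ)+1 by push_cast; ring]
    ring
  | succ n ih =>
    have h1 : (((n+1:ℕ)):ℝ)+1+(k:ℝ) = ((n:ℝ)+1+(k:ℝ))+1 := by push_cast; ring
    rw [h1, rdigamma_rec (by positivity), ih, Vv_succ_n]
    rw [show ((n:ℝ)+1+(k:ℝ)) = ((k:ℝ)+1+(n:ℝ)) by ring]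
    ring

lemma bracket_eq (n k : ℕ) :
    rdigamma ((n:ℝ)+1+(k:ℝ)) + rdigamma (1+(k:ℝ)) - 2 * rdigamma (1/2+(k:ℝ))
      = Vv n k + 2 * Wd k := by
  rw [dig_shift, show (1+(k:ℝ)) = (k:ℝ)+1 by ring, show ((1:ℝ)/2+(k:ℝ)) = (k:ℝ)+1/2 by ring, Wd]
  ring

lemma Gamma_half (n : ℕ) :
    Real.Gamma ((n:ℝ)+1/2) = rpoch (1/2) n * Real.sqrt Real.pi := by
  induction n with
  | zero =>
    rw [show ((0:ℕ):ℝ)+1/2 = 1/2 by norm_num, Real.Gamma_one_half_eq, rpoch_zero, one_mul]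
  | succ n ih =>
    have h1 : (((n+1:ℕ)):ℝ)+1/2 = ((n:ℝ)+1/2)+1 := by push_cast; ring
    rw [h1, Real.Gamma_add_one (by positivity), ih, rpoch_succ]
    ring

lemma summand_eq (n k : ℕ) :
    (rpoch (1 / 2) k) ^ 2 / (rpoch ((n : ℝ) + 1) k * (Nat.factorial k : ℝ)) *
        (rdigamma ((n : ℝ) + 1 + k) + rdigamma (1 + k) - 2 * rdigamma (1 / 2 + k))
      = tm n k := by
  rw [tm, cc, bracket_eq]


/-- Watson's convergent expansion for the Landau partial sums
`S_n = ∑_{k=0}^{n-1} ((1/2)_k)²/(k!)²`. -/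
theorem landau_watson_expansion (n : ℕ) (hn : 0 < n) :
    ∑ k ∈ Finset.range n, (rpoch (1 / 2) k) ^ 2 / (Nat.factorial k : ℝ) ^ 2
      = Real.Gamma ((n : ℝ) + 1 / 2) ^ 2 / (Real.Gamma n * Real.Gamma ((n : ℝ) + 1)) / Real.pi *
        ∑' k : ℕ, (rpoch (1 / 2) k) ^ 2 / (rpoch ((n : ℝ) + 1) k * (Nat.factorial k : ℝ)) *
          (rdigamma ((n : ℝ) + 1 + k) + rdigamma (1 + k) - 2 * rdigamma (1 / 2 + k)) := by
  obtain ⟨m, rfl⟩ : ∃ m, n = m + 1 := ⟨n-1, (Nat.succ_pred_eq_of_pos hn).symm⟩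
  have hts : (∑' k : ℕ, (rpoch (1 / 2) k) ^ 2 / (rpoch (((m+1:ℕ) : ℝ) + 1) k * (Nat.factorial k : ℝ)) *
          (rdigamma (((m+1:ℕ) : ℝ) + 1 + k) + rdigamma (1 + k) - 2 * rdigamma (1 / 2 + k)))
      = AA m := by
    rw [tsum_congr (fun k => summand_eq (m+1) k)]
    exact (main_induction m).2
  rw [hts, AA]
  have hΓh := Gamma_half (m+1)
  have hΓn : Real.Gamma (((m+1:ℕ)):ℝ) = (Nat.factorial m : ℝ) := by
    rw [show (((m+1:ℕ)):ℝ) = (m:ℝ)+1 by push_cast; ring]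
    exact Real.Gamma_nat_eq_factorial m
  have hΓn1 : Real.Gamma ((((m+1:ℕ)):ℝ) + 1) = (Nat.factorial (m+1) : ℝ) := by
    exact_mod_cast Real.Gamma_nat_eq_factorial (m+1)
  rw [hΓh, hΓn, hΓn1]
  have hsq : Real.sqrt Real.pi ^ 2 = Real.pi := Real.sq_sqrt Real.pi_pos.le
  have h1 : rpoch (1/2) (m+1) ≠ 0 := (rpoch_pos (by norm_num) (m+1)).ne'
  have h2 : (Nat.factorial m : ℝ) ≠ 0 := by exact_mod_cast (Nat.factorial_pos m).ne'
  have h3 : (Nat.factorial (m+1) : ℝ) ≠ 0 := by exact_mod_cast (Nat.factorial_pos (m+1)).ne'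
  have h4 : Real.pi ≠ 0 := Real.pi_ne_zero
  rw [mul_pow, hsq]
  field_simp
end

section
/- Let a, b, c be complex with Re(c − a − b) > 0 and none of a, b, c a nonpositive integer. Then the partial sums S_n(a,b;c) = ∑_{k=0}^{n-1} (a)_k(b)_k/((c)_k k!) converge as n → ∞ to Γ(c)Γ(c−a−b)/(Γ(c−a)Γ(c−b)). -/
/-- The Pochhammer (rising factorial) symbol `(x)_k` for complex `x`. -/
noncomputable def cpoch (x : ℂ) (k : ℕ) : ℂ := ∏ i ∈ Finset.range k, (x + i)

open Filter Topology Finset Complex Asymptotics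

namespace GaussAux

noncomputable def gterm (a b c : ℂ) (k : ℕ) : ℂ :=
  cpoch a k * cpoch b k / (cpoch c k * (Nat.factorial k : ℂ))

lemma cpoch_zero (x : ℂ) : cpoch x 0 = 1 := by simp [cpoch]

lemma cpoch_succ (x : ℂ) (k : ℕ) : cpoch x (k + 1) = cpoch x k * (x + k) := by
  simp [cpoch, Finset.prod_range_succ]

lemma cpoch_ne_zero {x : ℂ} (hx : ∀ j : ℕ, x ≠ -(j : ℂ)) (k : ℕ) : cpoch x k ≠ 0 := by
  induction k with
  | zero => simp [cpoch]
  | succ n ih =>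
    rw [cpoch_succ]
    exact mul_ne_zero ih (fun h => hx n (by linear_combination h))

lemma notNegInt_add_one {x : ℂ} (hx : ∀ j : ℕ, x ≠ -(j : ℂ)) : ∀ j : ℕ, x + 1 ≠ -(j : ℂ) := by
  intro j h
  exact hx (j + 1) (by push_cast; linear_combination h)

lemma notNegInt_of_re_pos {x : ℂ} (hx : 0 < x.re) : ∀ j : ℕ, x ≠ -(j : ℂ) := by
  intro j h
  rw [h] at hx
  simp only [Complex.neg_re, Complex.natCast_re] at hx
  have : (0:ℝ) ≤ (j:ℝ) := Nat.cast_nonneg j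
  linarith

lemma gterm_zero (a b c : ℂ) : gterm a b c 0 = 1 := by simp [gterm, cpoch]

lemma inv_gammaSeq_eq (z : ℂ) (n : ℕ) :
    (Complex.GammaSeq z n)⁻¹ = cpoch z (n + 1) / ((n : ℂ) ^ z * (Nat.factorial n : ℂ)) := by
  rw [Complex.GammaSeq, inv_div]
  rfl

lemma tendsto_inv_gammaSeq (z : ℂ) :
    Tendsto (fun n => (Complex.GammaSeq z n)⁻¹) atTop (𝓝 (Complex.Gamma z)⁻¹) := by
  by_cases hz : ∀ j : ℕ, z ≠ -(j : ℂ)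
  · exact (Complex.GammaSeq_tendsto_Gamma z).inv₀ (Complex.Gamma_ne_zero hz)
  · push_neg at hz
    obtain ⟨p, hp⟩ := hz
    have h0 : Complex.Gamma z = 0 := by rw [hp]; exact Complex.Gamma_neg_nat_eq_zero p
    rw [h0, inv_zero]
    refine Tendsto.congr' ?_ (tendsto_const_nhds (x := (0:ℂ)))
    filter_upwards [eventually_ge_atTop p] with n hn
    have hz0 : ∏ j ∈ Finset.range (n + 1), (z + (j:ℂ)) = 0 :=
      Finset.prod_eq_zero (Finset.mem_range.2 (Nat.lt_succ_of_le hn)) (by rw [hp]; ring)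
    simp [Complex.GammaSeq, hz0]


variable {a b c : ℂ}

lemma gterm_succ_formula (ha : ∀ j : ℕ, a ≠ -(j : ℂ)) (hb : ∀ j : ℕ, b ≠ -(j : ℂ))
    (hc : ∀ j : ℕ, c ≠ -(j : ℂ)) {n : ℕ} (hn : 1 ≤ n) :
    gterm a b c (n + 1) =
      ((Complex.GammaSeq a n)⁻¹ * (Complex.GammaSeq b n)⁻¹ / (Complex.GammaSeq c n)⁻¹)
        * ((n : ℂ) ^ (a + b - c) / ((n : ℂ) + 1)) := by
  have hn0 : (n : ℂ) ≠ 0 := Nat.cast_ne_zero.2 (by omega)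
  have hfac : ((Nat.factorial n : ℕ) : ℂ) ≠ 0 := Nat.cast_ne_zero.2 (Nat.factorial_ne_zero n)
  have hpa := cpoch_ne_zero ha (n + 1)
  have hpb := cpoch_ne_zero hb (n + 1)
  have hpc := cpoch_ne_zero hc (n + 1)
  have hcpow : ∀ z : ℂ, (n : ℂ) ^ z ≠ 0 := fun z h => hn0 (Complex.cpow_eq_zero_iff _ _ |>.1 h).1
  have hkey : (n : ℂ) ^ (a + b - c) * (n : ℂ) ^ c = (n : ℂ) ^ a * (n : ℂ) ^ b := by
    rw [← Complex.cpow_add _ _ hn0, ← Complex.cpow_add _ _ hn0]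
    ring_nf
  have hn1 : ((n : ℂ) + 1) ≠ 0 := by
    intro h
    have : (n : ℂ) = -((1:ℕ) : ℂ) := by push_cast; linear_combination h
    exact (notNegInt_of_re_pos (by simp [Complex.natCast_re]; omega) 1) this
  have hkey2 : (n : ℂ) ^ (a + b - c) = (n : ℂ) ^ a * (n : ℂ) ^ b / (n : ℂ) ^ c := by
    rw [eq_div_iff (hcpow c)]; exact hkey
  rw [gterm, inv_gammaSeq_eq, inv_gammaSeq_eq, inv_gammaSeq_eq, Nat.factorial_succ, hkey2]
  push_cast
  field_simp
  rw [eq_div_iff (by apply_rules [mul_ne_zero])]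
  ring

lemma tendsto_q (hc : ∀ j : ℕ, c ≠ -(j : ℂ)) :
    Tendsto (fun n => (Complex.GammaSeq a n)⁻¹ * (Complex.GammaSeq b n)⁻¹ /
        (Complex.GammaSeq c n)⁻¹) atTop
      (𝓝 ((Complex.Gamma a)⁻¹ * (Complex.Gamma b)⁻¹ / (Complex.Gamma c)⁻¹)) :=
  ((tendsto_inv_gammaSeq a).mul (tendsto_inv_gammaSeq b)).div (tendsto_inv_gammaSeq c)
    (inv_ne_zero (Complex.Gamma_ne_zero hc))

lemma isBigO_gterm (hs : 0 < (c - a - b).re) (ha : ∀ j : ℕ, a ≠ -(j : ℂ))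
    (hb : ∀ j : ℕ, b ≠ -(j : ℂ)) (hc : ∀ j : ℕ, c ≠ -(j : ℂ)) :
    (fun n : ℕ => gterm a b c (n + 1)) =O[atTop]
      fun n : ℕ => (n : ℝ) ^ (-1 - (c - a - b).re) := by
  set σ := (c - a - b).re with hσ
  have hre : (a + b - c).re = -σ := by simp [hσ, Complex.sub_re, Complex.add_re]; ring
  have h1 : (fun n : ℕ => ((Complex.GammaSeq a n)⁻¹ * (Complex.GammaSeq b n)⁻¹ /
      (Complex.GammaSeq c n)⁻¹)) =O[atTop] (fun _ : ℕ => (1 : ℝ)) :=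
    (tendsto_q hc).isBigO_one ℝ
  have h2 : (fun n : ℕ => (n : ℂ) ^ (a + b - c) / ((n : ℂ) + 1)) =O[atTop]
      (fun n : ℕ => (n : ℝ) ^ (-1 - σ)) := by
    rw [Asymptotics.isBigO_iff]
    refine ⟨1, ?_⟩
    filter_upwards [eventually_ge_atTop 1] with n hn
    have hnR : (0 : ℝ) < (n : ℝ) := by exact_mod_cast hn
    have hnn : ‖(n : ℂ) + 1‖ = (n : ℝ) + 1 := by
      rw [show ((n : ℂ) + 1) = (((n : ℝ) + 1 : ℝ) : ℂ) by push_cast; ring,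
        Complex.norm_real]
      exact abs_of_pos (by linarith)
    have hnorm : ‖(n : ℂ) ^ (a + b - c) / ((n : ℂ) + 1)‖ = (n : ℝ) ^ (-σ) / ((n : ℝ) + 1) := by
      rw [norm_div, Complex.norm_natCast_cpow_of_pos (by omega), hre, hnn]
    have e1 : (n : ℝ) ^ (-1 - σ) = (n : ℝ) ^ (-σ) * ((n : ℝ))⁻¹ := by
      rw [show -1 - σ = -σ + -1 by ring, Real.rpow_add hnR, Real.rpow_neg_one]
    have hpos : (0 : ℝ) < (n : ℝ) ^ (-σ) := Real.rpow_pos_of_pos hnR _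
    rw [hnorm, Real.norm_eq_abs, abs_of_pos (Real.rpow_pos_of_pos hnR _), one_mul, e1,
      ← div_eq_mul_inv]
    exact div_le_div_of_nonneg_left hpos.le hnR (by linarith)
  have heq : (fun n : ℕ => gterm a b c (n + 1)) =ᶠ[atTop]
      fun n : ℕ => ((Complex.GammaSeq a n)⁻¹ * (Complex.GammaSeq b n)⁻¹ /
        (Complex.GammaSeq c n)⁻¹) * ((n : ℂ) ^ (a + b - c) / ((n : ℂ) + 1)) := by
    filter_upwards [eventually_ge_atTop 1] with n hn
    exact gterm_succ_formula ha hb hc hn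
  have hfin := (h1.mul h2).congr' heq.symm (Filter.EventuallyEq.refl _ _)
  simpa using hfin

lemma summable_norm_gterm (hs : 0 < (c - a - b).re) (ha : ∀ j : ℕ, a ≠ -(j : ℂ))
    (hb : ∀ j : ℕ, b ≠ -(j : ℂ)) (hc : ∀ j : ℕ, c ≠ -(j : ℂ)) :
    Summable (fun k => ‖gterm a b c k‖) := by
  have hg : Summable (fun n : ℕ => (n : ℝ) ^ (-1 - (c - a - b).re)) :=
    Real.summable_nat_rpow.2 (by linarith)
  have h1 : Summable (fun n : ℕ => ‖gterm a b c (n + 1)‖) :=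
    summable_of_isBigO_nat hg (isBigO_gterm hs ha hb hc).norm_left
  exact (summable_nat_add_iff 1).1 h1

lemma summable_gterm (hs : 0 < (c - a - b).re) (ha : ∀ j : ℕ, a ≠ -(j : ℂ))
    (hb : ∀ j : ℕ, b ≠ -(j : ℂ)) (hc : ∀ j : ℕ, c ≠ -(j : ℂ)) :
    Summable (gterm a b c) :=
  (summable_norm_gterm hs ha hb hc).of_norm

lemma cpoch_add_one (c : ℂ) (k : ℕ) : cpoch (c + 1) k * c = cpoch c k * (c + k) := by
  induction k with
  | zero => simp [cpoch]
  | succ n ih =>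
    rw [cpoch_succ, cpoch_succ]
    push_cast
    linear_combination (c + 1 + n) * ih

lemma gterm_cSucc (ha : ∀ j : ℕ, a ≠ -(j : ℂ)) (hb : ∀ j : ℕ, b ≠ -(j : ℂ))
    (hc : ∀ j : ℕ, c ≠ -(j : ℂ)) (k : ℕ) :
    gterm a b (c + 1) k * (c + k) = gterm a b c k * c := by
  have h1 := cpoch_add_one c k
  have hpc := cpoch_ne_zero hc k
  have hpc1 := cpoch_ne_zero (notNegInt_add_one hc) k
  have hfac : ((Nat.factorial k : ℕ) : ℂ) ≠ 0 := Nat.cast_ne_zero.2 (Nat.factorial_ne_zero k)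
  rw [gterm, gterm]
  field_simp
  linear_combination (-(cpoch a k * cpoch b k)) * h1

lemma gterm_succ (ha : ∀ j : ℕ, a ≠ -(j : ℂ)) (hb : ∀ j : ℕ, b ≠ -(j : ℂ))
    (hc : ∀ j : ℕ, c ≠ -(j : ℂ)) (k : ℕ) :
    gterm a b c (k + 1) * ((c + k) * ((k : ℂ) + 1)) = gterm a b c k * ((a + k) * (b + k)) := by
  have hpc := cpoch_ne_zero hc k
  have hck : c + (k : ℂ) ≠ 0 := fun h => hc k (by linear_combination h)
  have hk1 : (k : ℂ) + 1 ≠ 0 := by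
    intro h
    have h2 : ((k : ℝ) + 1) = 0 := by exact_mod_cast congrArg Complex.re h
    have : (0:ℝ) ≤ (k:ℝ) := Nat.cast_nonneg k
    linarith
  have hfac : ((Nat.factorial k : ℕ) : ℂ) ≠ 0 := Nat.cast_ne_zero.2 (Nat.factorial_ne_zero k)
  rw [gterm, gterm, cpoch_succ, cpoch_succ, cpoch_succ, Nat.factorial_succ]
  push_cast
  field_simp

lemma telescope_id (ha : ∀ j : ℕ, a ≠ -(j : ℂ)) (hb : ∀ j : ℕ, b ≠ -(j : ℂ))
    (hc : ∀ j : ℕ, c ≠ -(j : ℂ)) (k : ℕ) :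
    c * (c - a - b) * gterm a b c k - (c - a) * (c - b) * gterm a b (c + 1) k
      = c * (k : ℂ) * gterm a b c k - c * ((k : ℂ) + 1) * gterm a b c (k + 1) := by
  have hck : c + (k : ℂ) ≠ 0 := fun h => hc k (by linear_combination h)
  have hX := gterm_cSucc ha hb hc k
  have hS := gterm_succ ha hb hc k
  have key : (c + (k : ℂ)) * (c * (c - a - b) * gterm a b c k
        - (c - a) * (c - b) * gterm a b (c + 1) k)
      = (c + (k : ℂ)) * (c * (k : ℂ) * gterm a b c k
        - c * ((k : ℂ) + 1) * gterm a b c (k + 1)) := by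
    linear_combination (-((c - a) * (c - b))) * hX + c * hS
  exact mul_left_cancel₀ hck key

lemma gammaSeq_ne_zero {z : ℂ} (hz : ∀ j : ℕ, z ≠ -(j : ℂ)) {n : ℕ} (hn : 1 ≤ n) :
    Complex.GammaSeq z n ≠ 0 := by
  have hn0 : (n : ℂ) ≠ 0 := Nat.cast_ne_zero.2 (by omega)
  rw [Complex.GammaSeq]
  refine div_ne_zero (mul_ne_zero (fun h => hn0 ((Complex.cpow_eq_zero_iff _ _).1 h).1)
    (Nat.cast_ne_zero.2 (Nat.factorial_ne_zero n))) ?_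
  exact cpoch_ne_zero hz (n + 1)

lemma re_add_nat (x : ℂ) (n : ℕ) : (x + (n : ℂ)).re = x.re + n := by
  simp [Complex.add_re]

lemma contiguous (hs : 0 < (c - a - b).re) (ha : ∀ j : ℕ, a ≠ -(j : ℂ))
    (hb : ∀ j : ℕ, b ≠ -(j : ℂ)) (hc : ∀ j : ℕ, c ≠ -(j : ℂ)) :
    c * (c - a - b) * ∑' k, gterm a b c k
      = (c - a) * (c - b) * ∑' k, gterm a b (c + 1) k := by
  have hc1 := notNegInt_add_one hc
  have hs1 : 0 < (c + 1 - a - b).re := by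
    have h : (c + 1 - a - b).re = (c - a - b).re + 1 := by
      simp [Complex.sub_re, Complex.add_re]
      ring
    rw [h]; linarith
  have S1 := summable_gterm hs ha hb hc
  have S2 := summable_gterm hs1 ha hb hc1
  have hsum : HasSum
      (fun k => c * (c - a - b) * gterm a b c k - (c - a) * (c - b) * gterm a b (c + 1) k)
      (c * (c - a - b) * ∑' k, gterm a b c k
        - (c - a) * (c - b) * ∑' k, gterm a b (c + 1) k) :=
    (S1.hasSum.mul_left _).sub (S2.hasSum.mul_left _)
  have hps := hsum.tendsto_sum_nat
  have heq : (fun n : ℕ => ∑ k ∈ Finset.range n,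
        (c * (c - a - b) * gterm a b c k - (c - a) * (c - b) * gterm a b (c + 1) k))
      = fun n : ℕ => -(c * (n : ℂ) * gterm a b c n) := by
    funext n
    have h1 : ∀ k ∈ Finset.range n,
        (c * (c - a - b) * gterm a b c k - (c - a) * (c - b) * gterm a b (c + 1) k)
          = (fun j : ℕ => c * (j : ℂ) * gterm a b c j) k
            - (fun j : ℕ => c * (j : ℂ) * gterm a b c j) (k + 1) := by
      intro k _
      simp only
      rw [telescope_id ha hb hc k]
      push_cast
      ring
    rw [Finset.sum_congr rfl h1, Finset.sum_range_sub' (fun j : ℕ => c * (j : ℂ) * gterm a b c j)]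
    simp
  rw [heq] at hps
  have hcp : Tendsto (fun n : ℕ => (n : ℂ) ^ (a + b - c)) atTop (𝓝 0) := by
    rw [tendsto_zero_iff_norm_tendsto_zero]
    have h2 : Tendsto (fun n : ℕ => (n : ℝ) ^ (-(c - a - b).re)) atTop (𝓝 0) :=
      (tendsto_rpow_neg_atTop hs).comp tendsto_natCast_atTop_atTop
    refine Tendsto.congr' ?_ h2
    filter_upwards [eventually_ge_atTop 1] with n hn
    rw [Complex.norm_natCast_cpow_of_pos (by omega)]
    congr 1
    simp [Complex.sub_re, Complex.add_re]
    ring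
  have hzero1 : Tendsto (fun n : ℕ => -(c * ((n : ℂ) + 1) * gterm a b c (n + 1))) atTop
      (𝓝 0) := by
    have hq := tendsto_q (a := a) (b := b) hc
    have hlim := (tendsto_const_nhds (x := -c)).mul (hq.mul hcp)
    rw [mul_zero, mul_zero] at hlim
    refine Tendsto.congr' ?_ hlim
    filter_upwards [eventually_ge_atTop 1] with n hn
    have hn1 : ((n : ℂ) + 1) ≠ 0 := by
      intro h
      have h2 : ((n : ℝ) + 1) = 0 := by exact_mod_cast congrArg Complex.re h
      have : (0:ℝ) ≤ (n:ℝ) := Nat.cast_nonneg n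
      linarith
    rw [gterm_succ_formula ha hb hc hn]
    have hga := gammaSeq_ne_zero ha hn
    have hgb := gammaSeq_ne_zero hb hn
    have hgc := gammaSeq_ne_zero hc hn
    field_simp
  have hzero : Tendsto (fun n : ℕ => -(c * (n : ℂ) * gterm a b c n)) atTop (𝓝 0) := by
    refine (tendsto_add_atTop_iff_nat 1).1 (Tendsto.congr (fun n => ?_) hzero1)
    push_cast
    ring
  have h0 := tendsto_nhds_unique hps hzero
  linear_combination h0

lemma norm_cpoch_mono {ρ : ℝ} (hρ : 0 < ρ) {d : ℂ} (hd : ρ ≤ d.re) (k : ℕ) :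
    ‖cpoch ((ρ : ℝ) : ℂ) k‖ ≤ ‖cpoch d k‖ := by
  rw [cpoch, cpoch, norm_prod, norm_prod]
  refine Finset.prod_le_prod (fun i _ => norm_nonneg _) (fun i _ => ?_)
  have h1 : ‖((ρ : ℝ) : ℂ) + (i : ℂ)‖ = ρ + i := by
    rw [show ((ρ : ℝ) : ℂ) + (i : ℂ) = (((ρ + i : ℝ)) : ℂ) by push_cast; ring, Complex.norm_real]
    have : (0:ℝ) ≤ (i:ℝ) := Nat.cast_nonneg i
    exact abs_of_pos (by linarith)
  rw [h1]
  calc ρ + (i:ℝ) ≤ d.re + i := by linarith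
    _ = (d + (i:ℂ)).re := by simp [Complex.add_re]
    _ ≤ ‖d + (i:ℂ)‖ := Complex.re_le_norm _

lemma norm_gterm_mono {ρ : ℝ} (hρ : 0 < ρ) {d : ℂ} (hd : ρ ≤ d.re) (k : ℕ) :
    ‖gterm a b d k‖ ≤ ‖gterm a b ((ρ : ℝ) : ℂ) k‖ := by
  have hρne : ∀ j : ℕ, ((ρ : ℝ) : ℂ) ≠ -(j : ℂ) :=
    notNegInt_of_re_pos (by simpa using hρ)
  have h1 : (0:ℝ) < ‖cpoch ((ρ : ℝ) : ℂ) k‖ := norm_pos_iff.2 (cpoch_ne_zero hρne k)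
  have h2 := norm_cpoch_mono hρ hd k
  have hfp : (0:ℝ) < ‖((Nat.factorial k : ℕ) : ℂ)‖ := by
    rw [norm_pos_iff]
    exact_mod_cast Nat.cast_ne_zero.2 (Nat.factorial_ne_zero k)
  simp only [gterm, norm_div, norm_mul]
  apply div_le_div_of_nonneg_left (by positivity) (by positivity)
  exact mul_le_mul_of_nonneg_right h2 (norm_nonneg _)

lemma tendsto_gterm_fixed (k : ℕ) (hk : 1 ≤ k) :
    Tendsto (fun m : ℕ => gterm a b (c + (m : ℂ)) k) atTop (𝓝 0) := by
  rw [tendsto_zero_iff_norm_tendsto_zero]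
  obtain ⟨M, hM⟩ := exists_nat_ge (1 - c.re)
  have hbound : Tendsto (fun m : ℕ => ‖cpoch a k * cpoch b k‖ * (c.re + m)⁻¹) atTop (𝓝 0) := by
    have h1 : Tendsto (fun m : ℕ => c.re + (m:ℝ)) atTop atTop :=
      tendsto_atTop_add_const_left _ _ tendsto_natCast_atTop_atTop
    simpa using tendsto_const_nhds.mul h1.inv_tendsto_atTop
  refine squeeze_zero' (Filter.Eventually.of_forall (fun m => norm_nonneg _)) ?_ hbound
  filter_upwards [eventually_ge_atTop M] with m hm
  have hcm : (1:ℝ) ≤ c.re + m := by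
    have : (M:ℝ) ≤ m := Nat.cast_le.2 hm
    linarith
  have hfact : (1:ℝ) ≤ ‖((Nat.factorial k : ℕ) : ℂ)‖ := by
    rw [RCLike.norm_natCast]
    exact_mod_cast Nat.one_le_iff_ne_zero.2 (Nat.factorial_ne_zero k)
  have hfal : ∀ i ∈ Finset.range k, (1:ℝ) ≤ ‖c + (m:ℂ) + (i:ℂ)‖ := by
    intro i _
    calc (1:ℝ) ≤ c.re + m + i := by
          have : (0:ℝ) ≤ (i:ℝ) := Nat.cast_nonneg i
          linarith
      _ = (c + (m:ℂ) + (i:ℂ)).re := by simp [Complex.add_re]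
      _ ≤ ‖c + (m:ℂ) + (i:ℂ)‖ := Complex.re_le_norm _
  have hprod : c.re + m ≤ ‖cpoch (c + (m:ℂ)) k‖ := by
    rw [cpoch, norm_prod]
    have h0 : ∏ i ∈ Finset.range k, (if i = 0 then c.re + (m:ℝ) else 1)
        ≤ ∏ i ∈ Finset.range k, ‖c + (m:ℂ) + (i:ℂ)‖ := by
      refine Finset.prod_le_prod (fun i _ => ?_) (fun i hi => ?_)
      · split <;> linarith
      · by_cases h : i = 0
        · subst h
          simp only [if_pos rfl]
          calc c.re + (m:ℝ) = (c + (m:ℂ) + ((0:ℕ):ℂ)).re := by simp [Complex.add_re]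
            _ ≤ _ := Complex.re_le_norm _
        · rw [if_neg h]
          exact hfal i hi
    refine le_trans ?_ h0
    rw [Finset.prod_ite_eq' (Finset.range k) 0 (fun _ => c.re + (m:ℝ))]
    rw [if_pos (Finset.mem_range.2 hk)]
  calc ‖gterm a b (c + (m:ℂ)) k‖
      = ‖cpoch a k * cpoch b k‖ / (‖cpoch (c + (m:ℂ)) k‖ * ‖((Nat.factorial k : ℕ) : ℂ)‖) := by
        rw [gterm, norm_div, norm_mul ((cpoch (c + (m:ℂ)) k)) _]
    _ ≤ ‖cpoch a k * cpoch b k‖ / ((c.re + m) * 1) := by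
        refine div_le_div_of_nonneg_left (norm_nonneg _) (by positivity) ?_
        exact mul_le_mul hprod hfact (by norm_num) (norm_nonneg _)
    _ = ‖cpoch a k * cpoch b k‖ * (c.re + m)⁻¹ := by rw [mul_one, div_eq_mul_inv]

lemma tendsto_F_shift (hs : 0 < (c - a - b).re) (ha : ∀ j : ℕ, a ≠ -(j : ℂ))
    (hb : ∀ j : ℕ, b ≠ -(j : ℂ)) (hc : ∀ j : ℕ, c ≠ -(j : ℂ)) :
    Tendsto (fun m : ℕ => ∑' k, gterm a b (c + (m : ℂ)) k) atTop (𝓝 1) := by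
  obtain ⟨N, hN⟩ := exists_nat_ge (max (1 - c.re) (1 + a.re + b.re - c.re))
  set ρ : ℝ := c.re + N with hρdef
  have hN1 : 1 - c.re ≤ (N:ℝ) := le_trans (le_max_left _ _) hN
  have hN2 : 1 + a.re + b.re - c.re ≤ (N:ℝ) := le_trans (le_max_right _ _) hN
  have hρ1 : (1:ℝ) ≤ ρ := by rw [hρdef]; linarith
  have hρ0 : (0:ℝ) < ρ := by linarith
  have hρnotneg : ∀ j : ℕ, ((ρ:ℝ):ℂ) ≠ -(j : ℂ) := notNegInt_of_re_pos (by simpa using hρ0)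
  have hρab : 0 < (((ρ:ℝ):ℂ) - a - b).re := by
    simp only [Complex.sub_re, Complex.ofReal_re]
    rw [hρdef]; linarith
  have hBsum : Summable (fun k => ‖gterm a b ((ρ:ℝ):ℂ) k‖) :=
    summable_norm_gterm hρab ha hb hρnotneg
  have hab : ∀ k : ℕ, Tendsto (fun m : ℕ => gterm a b (c + (m : ℂ)) k) atTop
      (𝓝 (if k = 0 then 1 else 0)) := by
    intro k
    by_cases hk : k = 0
    · subst hk
      simp only [if_pos rfl]
      exact Tendsto.congr (fun m => (gterm_zero a b (c + m)).symm) tendsto_const_nhds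
    · rw [if_neg hk]
      exact tendsto_gterm_fixed k (Nat.one_le_iff_ne_zero.2 hk)
  have hgs : ∑' k : ℕ, (if k = 0 then (1:ℂ) else 0) = 1 := tsum_ite_eq 0 1
  have h := tendsto_tsum_of_dominated_convergence (f := fun (m : ℕ) (k : ℕ) =>
      gterm a b (c + (m : ℂ)) k) hBsum hab ?_
  · rw [hgs] at h
    exact h
  · filter_upwards [eventually_ge_atTop N] with m hm
    intro k
    have hd : ρ ≤ (c + (m:ℂ)).re := by
      rw [re_add_nat, hρdef]
      have : (N:ℝ) ≤ m := Nat.cast_le.2 hm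
      linarith
    exact norm_gterm_mono hρ0 hd k

lemma iterate_rel (hs : 0 < (c - a - b).re) (ha : ∀ j : ℕ, a ≠ -(j : ℂ))
    (hb : ∀ j : ℕ, b ≠ -(j : ℂ)) (hc : ∀ j : ℕ, c ≠ -(j : ℂ)) (m : ℕ) :
    cpoch c m * cpoch (c - a - b) m * (∑' k, gterm a b c k)
      = cpoch (c - a) m * cpoch (c - b) m * (∑' k, gterm a b (c + (m : ℂ)) k) := by
  induction m with
  | zero => simp [cpoch]
  | succ n ih =>
    have hs' : 0 < ((c + (n:ℂ)) - a - b).re := by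
      have h : ((c + (n:ℂ)) - a - b).re = (c - a - b).re + n := by
        simp [Complex.sub_re, Complex.add_re]
        ring
      rw [h]
      have : (0:ℝ) ≤ (n:ℝ) := Nat.cast_nonneg n
      linarith
    have hc' : ∀ j : ℕ, c + (n:ℂ) ≠ -(j : ℂ) := by
      intro j h
      exact hc (j + n) (by push_cast; linear_combination h)
    have hrel := contiguous (a := a) (b := b) (c := c + (n:ℂ)) hs' ha hb hc'
    have harg : c + ((n + 1 : ℕ) : ℂ) = (c + (n:ℂ)) + 1 := by push_cast; ring
    rw [harg, cpoch_succ, cpoch_succ, cpoch_succ, cpoch_succ]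
    linear_combination ((c + (n:ℂ)) * ((c - a - b) + (n:ℂ))) * ih
      + (cpoch (c - a) n * cpoch (c - b) n) * hrel

lemma Q_eq (ha : ∀ j : ℕ, a ≠ -(j : ℂ)) (hb : ∀ j : ℕ, b ≠ -(j : ℂ))
    (hc : ∀ j : ℕ, c ≠ -(j : ℂ)) (hcab : ∀ j : ℕ, c - a - b ≠ -(j : ℂ))
    {m : ℕ} (hm : 1 ≤ m) :
    cpoch (c - a) (m + 1) * cpoch (c - b) (m + 1)
        / (cpoch c (m + 1) * cpoch (c - a - b) (m + 1))
      = ((Complex.GammaSeq (c - a) m)⁻¹ * (Complex.GammaSeq (c - b) m)⁻¹)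
        / ((Complex.GammaSeq c m)⁻¹ * (Complex.GammaSeq (c - a - b) m)⁻¹) := by
  have hm0 : (m : ℂ) ≠ 0 := Nat.cast_ne_zero.2 (by omega)
  have hcpow : ∀ z : ℂ, (m : ℂ) ^ z ≠ 0 := fun z h => hm0 (Complex.cpow_eq_zero_iff _ _ |>.1 h).1
  have hfac : ((Nat.factorial m : ℕ) : ℂ) ≠ 0 := Nat.cast_ne_zero.2 (Nat.factorial_ne_zero m)
  have hpc := cpoch_ne_zero hc (m + 1)
  have hpcab := cpoch_ne_zero hcab (m + 1)
  have hpow : (m : ℂ) ^ (c - a) * (m : ℂ) ^ (c - b) = (m : ℂ) ^ c * (m : ℂ) ^ (c - a - b) := by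
    rw [← Complex.cpow_add _ _ hm0, ← Complex.cpow_add _ _ hm0]
    ring_nf
  have hrw : (m : ℂ) ^ (c - a) = (m : ℂ) ^ c * (m : ℂ) ^ (c - a - b) / (m : ℂ) ^ (c - b) := by
    rw [eq_div_iff (hcpow _)]; exact hpow
  rw [inv_gammaSeq_eq, inv_gammaSeq_eq, inv_gammaSeq_eq, inv_gammaSeq_eq, hrw]
  field_simp
  rw [eq_div_iff (by apply_rules [mul_ne_zero])]
  ring

end GaussAux


open GaussAux in
/-- Gauss's summation theorem: for `Re(c−a−b) > 0` the partial sums of `₂F₁(a,b;c;1)`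
converge to `Γ(c)Γ(c−a−b)/(Γ(c−a)Γ(c−b))`. -/
theorem gauss_summation (a b c : ℂ) (hs : 0 < (c - a - b).re)
    (ha : ∀ j : ℕ, a ≠ -(j : ℂ)) (hb : ∀ j : ℕ, b ≠ -(j : ℂ)) (hc : ∀ j : ℕ, c ≠ -(j : ℂ)) :
    Filter.Tendsto
      (fun n : ℕ =>
        ∑ k ∈ Finset.range n, cpoch a k * cpoch b k / (cpoch c k * (Nat.factorial k : ℂ)))
      Filter.atTop
      (nhds (Complex.Gamma c * Complex.Gamma (c - a - b) /
        (Complex.Gamma (c - a) * Complex.Gamma (c - b)))) := by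
  have hcab : ∀ j : ℕ, c - a - b ≠ -(j : ℂ) := notNegInt_of_re_pos hs
  have hsum := summable_gterm hs ha hb hc
  have hQrel : ∀ m : ℕ, (∑' k, gterm a b c k)
      = (cpoch (c - a) (m + 1) * cpoch (c - b) (m + 1)
          / (cpoch c (m + 1) * cpoch (c - a - b) (m + 1)))
        * ∑' k, gterm a b (c + (m : ℂ) + 1) k := by
    intro m
    have h := iterate_rel hs ha hb hc (m + 1)
    push_cast at h
    rw [← add_assoc] at h
    have h1 : cpoch c (m + 1) ≠ 0 := cpoch_ne_zero hc _
    have h2 : cpoch (c - a - b) (m + 1) ≠ 0 := cpoch_ne_zero hcab _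
    field_simp
    linear_combination h
  have hinva := tendsto_inv_gammaSeq (c - a)
  have hinvb := tendsto_inv_gammaSeq (c - b)
  have hinvc := tendsto_inv_gammaSeq c
  have hinvcab := tendsto_inv_gammaSeq (c - a - b)
  have hne : (Complex.Gamma c)⁻¹ * (Complex.Gamma (c - a - b))⁻¹ ≠ 0 :=
    mul_ne_zero (inv_ne_zero (Complex.Gamma_ne_zero hc))
      (inv_ne_zero (Complex.Gamma_ne_zero hcab))
  have hQlim : Tendsto (fun m : ℕ => cpoch (c - a) (m + 1) * cpoch (c - b) (m + 1)
        / (cpoch c (m + 1) * cpoch (c - a - b) (m + 1))) atTop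
      (𝓝 (Complex.Gamma c * Complex.Gamma (c - a - b) /
        (Complex.Gamma (c - a) * Complex.Gamma (c - b)))) := by
    have hlim2 := ((hinva.mul hinvb).div (hinvc.mul hinvcab) hne)
    have hval : ((Complex.Gamma (c - a))⁻¹ * (Complex.Gamma (c - b))⁻¹)
        / ((Complex.Gamma c)⁻¹ * (Complex.Gamma (c - a - b))⁻¹)
        = Complex.Gamma c * Complex.Gamma (c - a - b) /
          (Complex.Gamma (c - a) * Complex.Gamma (c - b)) := by
      rw [div_eq_mul_inv, div_eq_mul_inv, mul_inv, mul_inv, inv_inv, inv_inv]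
      ring
    rw [hval] at hlim2
    refine Tendsto.congr' ?_ hlim2
    filter_upwards [eventually_ge_atTop 1] with m hm
    exact (Q_eq ha hb hc hcab hm).symm
  have hF1 : Tendsto (fun m : ℕ => ∑' k, gterm a b (c + (m : ℂ) + 1) k) atTop (𝓝 1) := by
    refine Tendsto.congr (fun m => ?_)
      ((tendsto_F_shift hs ha hb hc).comp (tendsto_add_atTop_nat 1))
    show (∑' k, gterm a b (c + (((m + 1 : ℕ)) : ℂ)) k) = _
    rw [show c + (((m + 1 : ℕ)) : ℂ) = c + (m : ℂ) + 1 by push_cast; ring]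
  have hconst := hQlim.mul hF1
  rw [mul_one] at hconst
  have h1 : Tendsto (fun _ : ℕ => (∑' k, gterm a b c k)) atTop
      (𝓝 (Complex.Gamma c * Complex.Gamma (c - a - b) /
        (Complex.Gamma (c - a) * Complex.Gamma (c - b)))) :=
    Tendsto.congr (fun m => (hQrel m).symm) hconst
  have hval := tendsto_nhds_unique tendsto_const_nhds h1
  have hfinal := hsum.hasSum.tendsto_sum_nat
  rw [hval] at hfinal
  exact hfinal
end

section
/- Let a, b be complex numbers, not nonpositive integers, with c = a + b. Then as n → ∞ the partial sums satisfy S_n(a,b;a+b) = ∑_{k=0}^{n-1} (a)_k(b)_k/((a+b)_k k!) ∼ (Γ(a+b)/(Γ(a)Γ(b))) · log n, i.e., S_n(a,b;a+b)/log n → Γ(a+b)/(Γ(a)Γ(b)). -/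
open Filter Asymptotics Topology

lemma aux_norm_atTop (d : ℂ) :
    Tendsto (fun n : ℕ => ‖(n : ℂ) + d‖) atTop atTop := by
  refine tendsto_atTop_mono' atTop ?_
    (tendsto_atTop_add_const_right _ (-‖d‖) tendsto_natCast_atTop_atTop)
  filter_upwards [] with n
  have h1 : ‖(n : ℂ)‖ ≤ ‖(n : ℂ) + d‖ + ‖d‖ := by
    calc ‖(n : ℂ)‖ = ‖((n : ℂ) + d) + (-d)‖ := by ring_nf
      _ ≤ ‖(n : ℂ) + d‖ + ‖(-d)‖ := norm_add_le _ _
      _ = ‖(n : ℂ) + d‖ + ‖d‖ := by rw [norm_neg]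
  have h2 : ‖(n : ℂ)‖ = (n : ℝ) := by simp
  show (n:ℝ) + -‖d‖ ≤ ‖(n : ℂ) + d‖
  linarith

lemma aux_inv_zero (d : ℂ) :
    Tendsto (fun n : ℕ => ((n : ℂ) + d)⁻¹) atTop (nhds 0) := by
  rw [tendsto_zero_iff_norm_tendsto_zero]
  simp only [norm_inv]
  exact (tendsto_inv_atTop_zero).comp (aux_norm_atTop d)

lemma aux_ratio (c d : ℂ) :
    Tendsto (fun n : ℕ => ((n : ℂ) + c) / ((n : ℂ) + d)) atTop (nhds 1) := by
  have hne : ∀ᶠ n : ℕ in atTop, (n : ℂ) + d ≠ 0 := by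
    filter_upwards [(aux_norm_atTop d).eventually_gt_atTop 0] with n hn
    exact fun h => by simp [h] at hn
  have key : Tendsto (fun n : ℕ => 1 + (c - d) * ((n : ℂ) + d)⁻¹) atTop (nhds (1 + (c - d) * 0)) :=
    tendsto_const_nhds.add (tendsto_const_nhds.mul (aux_inv_zero d))
  rw [mul_zero, add_zero] at key
  refine key.congr' ?_
  filter_upwards [hne] with n hn
  field_simp
  ring

lemma cpoch_ne_zero {x : ℂ} (hx : ∀ j : ℕ, x ≠ -(j : ℂ)) (k : ℕ) : cpoch x k ≠ 0 := by
  refine Finset.prod_ne_zero_iff.mpr fun i _ => ?_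
  intro h
  exact hx i (by linear_combination h)

lemma aux_gammaSeq_ne_zero {x : ℂ} (hx : ∀ j : ℕ, x ≠ -(j : ℂ)) {n : ℕ} (hn : 1 ≤ n) :
    Complex.GammaSeq x n ≠ 0 := by
  have hn0 : (n : ℂ) ≠ 0 := Nat.cast_ne_zero.mpr (by omega)
  refine div_ne_zero (mul_ne_zero ?_ ?_) ?_
  · simp only [ne_eq, Complex.cpow_eq_zero_iff, not_and_or, not_not]
    exact Or.inl hn0
  · exact_mod_cast Nat.factorial_ne_zero n
  · exact cpoch_ne_zero hx (n + 1)

lemma fieldaux (A1 A2 B1 B2 u v L1 L2 m : ℂ) (h2 : A2 ≠ 0) (hB1 : B1 ≠ 0)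
    (hB2 : B2 ≠ 0) (hv : v ≠ 0) (hL2 : L2 ≠ 0)
    (key : m * L1 * (A2 * B2 * v) = A1 * B1 * u * L2) :
    m * (L1 / L2) = A1 / A2 / (B2 / B1) * (u / v) := by
  field_simp
  linear_combination key

lemma aux_eq (a b : ℂ) (ha : ∀ j : ℕ, a ≠ -(j : ℂ)) (hb : ∀ j : ℕ, b ≠ -(j : ℂ))
    (hs : ∀ j : ℕ, a + b ≠ -(j : ℂ)) {n : ℕ} (hn : 1 ≤ n) :
    (n : ℂ) * (cpoch a n * cpoch b n / (cpoch (a + b) n * (Nat.factorial n : ℂ))) =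
      Complex.GammaSeq (a + b) n / (Complex.GammaSeq a n * Complex.GammaSeq b n) *
        ((n : ℂ) * ((a + b) + n) / ((a + n) * (b + n))) := by
  have hn0 : (n : ℂ) ≠ 0 := Nat.cast_ne_zero.mpr (by omega)
  have hprod : ∀ x : ℂ, (∏ j ∈ Finset.range (n + 1), (x + j)) = cpoch x n * (x + n) := by
    intro x
    rw [show (∏ j ∈ Finset.range (n + 1), (x + j)) = cpoch x (n+1) from rfl]
    simp [cpoch, Finset.prod_range_succ]
  have hxn : ∀ (x : ℂ), (∀ j : ℕ, x ≠ -(j : ℂ)) → x + n ≠ 0 := by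
    intro x hx h
    exact hx n (by linear_combination h)
  have hcpow : (n : ℂ) ^ (a + b) = (n : ℂ) ^ a * (n : ℂ) ^ b := Complex.cpow_add _ _ hn0
  have hca : (n : ℂ) ^ a ≠ 0 := by
    simp only [ne_eq, Complex.cpow_eq_zero_iff, not_and_or, not_not]; exact Or.inl hn0
  have hcb : (n : ℂ) ^ b ≠ 0 := by
    simp only [ne_eq, Complex.cpow_eq_zero_iff, not_and_or, not_not]; exact Or.inl hn0
  have hf : (Nat.factorial n : ℂ) ≠ 0 := by exact_mod_cast Nat.factorial_ne_zero n
  have hPa := cpoch_ne_zero ha n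
  have hPb := cpoch_ne_zero hb n
  have hPs := cpoch_ne_zero hs n
  have han := hxn a ha
  have hbn := hxn b hb
  have hsn := hxn (a + b) hs
  have e1 : Complex.GammaSeq a n * Complex.GammaSeq b n
      = (n : ℂ) ^ (a + b) * (Nat.factorial n : ℂ) ^ 2
        / (cpoch a n * cpoch b n * ((a + n) * (b + n))) := by
    simp only [Complex.GammaSeq, hprod, hcpow]
    rw [div_mul_div_comm]
    ring_nf
  have e2 : Complex.GammaSeq (a + b) n
      = (n : ℂ) ^ (a + b) * (Nat.factorial n : ℂ) / (cpoch (a + b) n * ((a + b) + n)) := by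
    simp only [Complex.GammaSeq, hprod]
  have hcs : (n : ℂ) ^ (a + b) ≠ 0 := by
    simp only [ne_eq, Complex.cpow_eq_zero_iff, not_and_or, not_not]; exact Or.inl hn0
  rw [e1, e2]
  refine fieldaux _ _ _ _ _ _ _ _ _ (mul_ne_zero hPs hsn) (mul_ne_zero (mul_ne_zero hPa hPb) (mul_ne_zero han hbn))
    (mul_ne_zero hcs (pow_ne_zero 2 hf)) (mul_ne_zero han hbn) (mul_ne_zero hPs hf) ?_
  ring

lemma aux_main_limit (a b : ℂ) (ha : ∀ j : ℕ, a ≠ -(j : ℂ)) (hb : ∀ j : ℕ, b ≠ -(j : ℂ))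
    (hs : ∀ j : ℕ, a + b ≠ -(j : ℂ)) :
    Tendsto (fun n : ℕ => (n : ℂ) *
        (cpoch a n * cpoch b n / (cpoch (a + b) n * (Nat.factorial n : ℂ))))
      atTop (nhds (Complex.Gamma (a + b) / (Complex.Gamma a * Complex.Gamma b))) := by
  have h1 : Tendsto (fun n : ℕ =>
      Complex.GammaSeq (a + b) n / (Complex.GammaSeq a n * Complex.GammaSeq b n)) atTop
      (nhds (Complex.Gamma (a + b) / (Complex.Gamma a * Complex.Gamma b))) :=
    (Complex.GammaSeq_tendsto_Gamma (a + b)).div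
      ((Complex.GammaSeq_tendsto_Gamma a).mul (Complex.GammaSeq_tendsto_Gamma b))
      (mul_ne_zero (Complex.Gamma_ne_zero ha) (Complex.Gamma_ne_zero hb))
  have h2 : Tendsto (fun n : ℕ => (n : ℂ) * ((a + b) + n) / ((a + n) * (b + n))) atTop
      (nhds 1) := by
    have h3 := (aux_ratio 0 a).mul (aux_ratio (a + b) b)
    rw [one_mul] at h3
    refine h3.congr fun n => ?_
    rw [div_mul_div_comm]
    congr 1 <;> ring
  have h4 := h1.mul h2
  rw [mul_one] at h4
  refine h4.congr' ?_
  filter_upwards [eventually_ge_atTop 1] with n hn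
  exact (aux_eq a b ha hb hs hn).symm

noncomputable def Hsum (n : ℕ) : ℝ := ∑ i ∈ Finset.range n, ((i : ℝ))⁻¹

lemma aux_H_eq (m : ℕ) : Hsum (m + 1) = (harmonic m : ℝ) := by
  rw [Hsum, Finset.sum_range_succ']
  push_cast [harmonic]
  simp

lemma aux_H_sub_log :
    Tendsto (fun n : ℕ => Hsum n - Real.log n) atTop (𝓝 Real.eulerMascheroniConstant) := by
  have h2 : Tendsto (fun n : ℕ => (harmonic (n - 1) : ℝ) - Real.log ((n - 1 : ℕ) : ℝ)) atTop
      (𝓝 Real.eulerMascheroniConstant) :=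
    Real.tendsto_harmonic_sub_log.comp (tendsto_sub_atTop_nat 1)
  have h4 : Tendsto (fun n : ℕ => ((n - 1 : ℕ) : ℝ) / n) atTop (𝓝 1) := by
    have h5 : Tendsto (fun n : ℕ => 1 - ((n : ℝ))⁻¹) atTop (𝓝 (1 - 0)) :=
      tendsto_const_nhds.sub (tendsto_inv_atTop_zero.comp tendsto_natCast_atTop_atTop)
    rw [sub_zero] at h5
    refine h5.congr' ?_
    filter_upwards [eventually_ge_atTop 1] with n hn
    have hn0 : (n : ℝ) ≠ 0 := Nat.cast_ne_zero.mpr (by omega)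
    have : ((n - 1 : ℕ) : ℝ) = (n : ℝ) - 1 := by
      push_cast [Nat.cast_sub hn]; ring
    rw [this]
    field_simp
  have h3 : Tendsto (fun n : ℕ => Real.log ((n - 1 : ℕ) : ℝ) - Real.log n) atTop (𝓝 0) := by
    have h6 := (Real.continuousAt_log one_ne_zero).tendsto.comp h4
    rw [Real.log_one] at h6
    refine h6.congr' ?_
    filter_upwards [eventually_ge_atTop 2] with n hn
    have h7 : ((n - 1 : ℕ) : ℝ) ≠ 0 := Nat.cast_ne_zero.mpr (by omega)
    have h8 : (n : ℝ) ≠ 0 := Nat.cast_ne_zero.mpr (by omega)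
    simp only [Function.comp_apply]
    rw [Real.log_div h7 h8]
  have h9 := h2.add h3
  rw [add_zero] at h9
  refine h9.congr' ?_
  filter_upwards [eventually_ge_atTop 1] with n hn
  obtain ⟨m, rfl⟩ : ∃ m, n = m + 1 := ⟨n - 1, by omega⟩
  simp only [Nat.add_sub_cancel]
  rw [aux_H_eq]
  ring

lemma aux_log_atTop : Tendsto (fun n : ℕ => Real.log n) atTop atTop :=
  Real.tendsto_log_atTop.comp tendsto_natCast_atTop_atTop

lemma aux_H_atTop : Tendsto Hsum atTop atTop := by
  have := aux_H_sub_log.add_atTop aux_log_atTop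
  refine this.congr fun n => by ring

lemma aux_H_isBigO_log : Hsum =O[atTop] fun n : ℕ => Real.log n := by
  have h1 : (fun n : ℕ => Hsum n - Real.log n) =O[atTop] (fun _ : ℕ => (1 : ℝ)) :=
    aux_H_sub_log.isBigO_one ℝ
  have h2 : (fun _ : ℕ => (1 : ℝ)) =O[atTop] fun n : ℕ => Real.log n := by
    refine (Asymptotics.isLittleO_const_left.mpr (Or.inr ?_)).isBigO
    exact tendsto_abs_atTop_atTop.comp aux_log_atTop
  have h3 := (h1.trans h2).add (Asymptotics.isBigO_refl (fun n : ℕ => Real.log n) atTop)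
  refine h3.congr' ?_ (by rfl)
  filter_upwards [] with n
  ring

lemma aux_H_div_log : Tendsto (fun n : ℕ => Hsum n / Real.log n) atTop (𝓝 1) := by
  have h1 : Tendsto (fun n : ℕ => (Hsum n - Real.log n) * (Real.log n)⁻¹ + 1) atTop
      (𝓝 (Real.eulerMascheroniConstant * 0 + 1)) :=
    (aux_H_sub_log.mul (tendsto_inv_atTop_zero.comp aux_log_atTop)).add tendsto_const_nhds
  rw [mul_zero, zero_add] at h1
  refine h1.congr' ?_
  filter_upwards [aux_log_atTop.eventually_gt_atTop 0] with n hn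
  field_simp
  ring

/-- Hill's leading asymptotic in the logarithmic case `c = a + b`:
`S_n(a,b;a+b) ∼ (Γ(a+b)/(Γ(a)Γ(b))) log n`. -/
theorem hill_logarithmic_asymptotic (a b : ℂ)
    (ha : ∀ j : ℕ, a ≠ -(j : ℂ)) (hb : ∀ j : ℕ, b ≠ -(j : ℂ)) :
    Filter.Tendsto
      (fun n : ℕ =>
        (∑ k ∈ Finset.range n,
            cpoch a k * cpoch b k / (cpoch (a + b) k * (Nat.factorial k : ℂ)))
          / (Real.log n : ℂ))
      Filter.atTop
      (nhds (Complex.Gamma (a + b) / (Complex.Gamma a * Complex.Gamma b))) := by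
  by_cases hs : ∀ j : ℕ, a + b ≠ -(j : ℂ)
  · set C := Complex.Gamma (a + b) / (Complex.Gamma a * Complex.Gamma b) with hCdef
    set t : ℕ → ℂ :=
      fun k => cpoch a k * cpoch b k / (cpoch (a + b) k * (Nat.factorial k : ℂ)) with ht
    have h0 : Tendsto (fun k : ℕ => (k : ℂ) * t k - C) atTop (𝓝 0) :=
      tendsto_sub_nhds_zero_iff.mpr (aux_main_limit a b ha hb hs)
    have hO : (fun k : ℕ => ((k : ℂ))⁻¹) =O[atTop] fun k : ℕ => ((k : ℝ))⁻¹ :=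
      Asymptotics.isBigO_of_le _ fun k => by simp
    have hu : (fun k : ℕ => t k - C * ((k : ℂ))⁻¹) =o[atTop] fun k : ℕ => ((k : ℝ))⁻¹ := by
      have h1 := ((Asymptotics.isLittleO_one_iff ℝ).mpr h0).mul_isBigO hO
      refine h1.congr' ?_ ?_
      · filter_upwards [eventually_ge_atTop 1] with k hk
        have hk0 : (k : ℂ) ≠ 0 := Nat.cast_ne_zero.mpr (by omega)
        field_simp
      · filter_upwards [] with k
        rw [one_mul]
    have hsum : (fun n : ℕ => ∑ k ∈ Finset.range n, (t k - C * ((k : ℂ))⁻¹)) =o[atTop] Hsum :=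
      hu.sum_range (fun i => by positivity) aux_H_atTop
    have hsu_log := hsum.trans_isBigO aux_H_isBigO_log
    have hOc : (fun n : ℕ => Real.log n) =O[atTop] fun n : ℕ => ((Real.log n : ℝ) : ℂ) :=
      Asymptotics.isBigO_of_le _ fun n =>
        le_of_eq (by rw [Complex.norm_real, Real.norm_eq_abs])
    have hdiv0 : Tendsto (fun n : ℕ =>
        (∑ k ∈ Finset.range n, (t k - C * ((k : ℂ))⁻¹)) / ((Real.log n : ℝ) : ℂ)) atTop
        (𝓝 0) :=
      (hsu_log.trans_isBigO hOc).tendsto_div_nhds_zero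
    have hT2 : Tendsto (fun n : ℕ => ((Hsum n : ℝ) : ℂ) / ((Real.log n : ℝ) : ℂ)) atTop
        (𝓝 1) := by
      have h2 := (Complex.continuous_ofReal.tendsto 1).comp aux_H_div_log
      refine h2.congr fun n => ?_
      simp [Complex.ofReal_div]
    have hHc : ∀ n : ℕ, ((Hsum n : ℝ) : ℂ) = ∑ k ∈ Finset.range n, ((k : ℂ))⁻¹ := by
      intro n
      rw [Hsum]
      push_cast
      rfl
    have decomp : ∀ n : ℕ, (∑ k ∈ Finset.range n, t k) =
        (∑ k ∈ Finset.range n, (t k - C * ((k : ℂ))⁻¹)) + C * ((Hsum n : ℝ) : ℂ) := by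
      intro n
      rw [hHc, Finset.mul_sum, ← Finset.sum_add_distrib]
      congr 1
      funext k
      ring
    have final := hdiv0.add (hT2.const_mul C)
    rw [zero_add, mul_one] at final
    refine final.congr fun n => ?_
    rw [decomp n, add_div, mul_div_assoc]
  · push_neg at hs
    obtain ⟨m, hm⟩ := hs
    have hG : Complex.Gamma (a + b) = 0 := by
      rw [hm]; exact Complex.Gamma_neg_nat_eq_zero m
    rw [hG, zero_div]
    have hinv : Tendsto (fun n : ℕ => (((Real.log n : ℝ) : ℂ))⁻¹) atTop (𝓝 0) := by
      have h2 := (Complex.continuous_ofReal.tendsto 0).comp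
        (tendsto_inv_atTop_zero.comp aux_log_atTop)
      refine h2.congr fun n => ?_
      simp
    set S : ℕ → ℂ :=
      fun n => ∑ k ∈ Finset.range n,
        cpoch a k * cpoch b k / (cpoch (a + b) k * (Nat.factorial k : ℂ)) with hS
    have hzero : ∀ k, m + 1 ≤ k → cpoch (a + b) k = 0 := by
      intro k hk
      refine Finset.prod_eq_zero (i := m) (Finset.mem_range.mpr (by omega)) ?_
      rw [hm]
      exact neg_add_cancel _
    have hconst : ∀ᶠ n in atTop, S n = S (m + 1) := by
      filter_upwards [eventually_ge_atTop (m + 1)] with n hn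
      refine (Finset.sum_subset (Finset.range_subset_range.mpr hn) ?_).symm
      intro k hk1 hk2
      have hk3 : m + 1 ≤ k := by
        simp only [Finset.mem_range, not_lt] at hk2
        omega
      rw [hzero k hk3, zero_mul, div_zero]
    have final := hinv.const_mul (S (m + 1))
    rw [mul_zero] at final
    refine final.congr' ?_
    filter_upwards [hconst] with n hn
    show S (m + 1) * ((Real.log n : ℂ))⁻¹ = S n / (Real.log n : ℂ)
    rw [hn, div_eq_mul_inv]
end
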